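/- Let Φ(ρ) = Σ_{K ∈ K} K ρ K† be a map on 2^m × 2^m complex matrices given by a finite Kraus family K such that every K ∈ K factors as K = V_K · P_K for some diagonal matrix V_K and some m-qubit Pauli string P_K. Then for every m-qubit Pauli string W there exists a diagonal 2^m × 2^m matrix U such that Φ(W) = U · W. (Equivalently, Φ(W) lies in the span of {V·W : V ∈ {𝟙,Z}^{⊗m}}.) -/
import Mathlib


open Matrix

/-- The four Pauli matrices `𝟙, X, Y, Z`. -/
noncomputable def pauli : Fin 4 → Matrix (Fin 2) (Fin 2) ℂ
  | 0 => !![1, 0; 0, 1]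
  | 1 => !![0, 1; 1, 0]
  | 2 => !![0, -Complex.I; Complex.I, 0]
  | 3 => !![1, 0; 0, -1]

/-- The `m`-qubit Pauli string determined by `s : Fin m → Fin 4` (an `m`-fold Kronecker
product of Pauli matrices). -/
noncomputable def pauliString {m : ℕ} (s : Fin m → Fin 4) :
    Matrix (Fin m → Fin 2) (Fin m → Fin 2) ℂ :=
  Matrix.of fun a b => ∏ i, pauli (s i) (a i) (b i)

/-- The bit flipped by each Pauli matrix. -/
def pshift : Fin 4 → Fin 2 := ![0, 1, 1, 0]

lemma pauli_eq_zero (k : Fin 4) (a b : Fin 2) (h : b ≠ a + pshift k) :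
    pauli k a b = 0 := by
  fin_cases k <;> fin_cases a <;> fin_cases b <;> simp_all [pauli, pshift]

lemma pauli_ne_zero (k : Fin 4) (a : Fin 2) : pauli k a (a + pshift k) ≠ 0 := by
  fin_cases k <;> fin_cases a <;> simp [pauli, pshift, Complex.I_ne_zero]

lemma pauliString_eq_zero {m : ℕ} (s : Fin m → Fin 4) (a b : Fin m → Fin 2)
    (h : b ≠ fun i => a i + pshift (s i)) : pauliString s a b = 0 := by
  rw [Function.ne_iff] at h
  obtain ⟨i, hi⟩ := h
  exact Finset.prod_eq_zero (Finset.mem_univ i) (pauli_eq_zero _ _ _ hi)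

lemma pauliString_ne_zero {m : ℕ} (s : Fin m → Fin 4) (a : Fin m → Fin 2) :
    pauliString s a (fun i => a i + pshift (s i)) ≠ 0 := by
  rw [pauliString, Matrix.of_apply, Finset.prod_ne_zero_iff]
  exact fun i _ => pauli_ne_zero _ _

lemma supp_mul {n : Type*} [Fintype n] [AddGroup n]
    {A B : Matrix n n ℂ} {p q : n}
    (hA : ∀ a b, b ≠ a + p → A a b = 0) (hB : ∀ a b, b ≠ a + q → B a b = 0) :
    ∀ a b, b ≠ a + p + q → (A * B) a b = 0 := by
  intro a b h
  rw [Matrix.mul_apply]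
  apply Finset.sum_eq_zero
  intro c _
  by_cases hc : c = a + p
  · subst hc
    rw [hB _ _ h, mul_zero]
  · rw [hA _ _ hc, zero_mul]

lemma supp_diag {n : Type*} [DecidableEq n] [AddGroup n] (v : n → ℂ) :
    ∀ a b : n, b ≠ a + (0 : n) → Matrix.diagonal v a b = 0 := by
  intro a b h
  rw [add_zero] at h
  exact Matrix.diagonal_apply_ne v fun he => h he.symm

lemma supp_conjTranspose {n : Type*} [AddGroup n]
    {A : Matrix n n ℂ} {p : n} (hp : p + p = 0)
    (hA : ∀ a b, b ≠ a + p → A a b = 0) :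
    ∀ a b, b ≠ a + p → Aᴴ a b = 0 := by
  intro a b h
  have : a ≠ b + p := by
    intro he
    apply h
    rw [he, add_assoc, hp, add_zero]
  rw [Matrix.conjTranspose_apply, hA _ _ this, star_zero]

/-- If every Kraus operator of `Φ(ρ) = Σ_K K ρ K†` factors as a diagonal
matrix times a Pauli string, then for every Pauli string `W`, `Φ(W) = U·W` for some diagonal
matrix `U`. -/
theorem channel_of_diagonal_times_pauli_kraus (m : ℕ) (ι : Type*) [Fintype ι]
    (K : ι → Matrix (Fin m → Fin 2) (Fin m → Fin 2) ℂ)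
    (hK : ∀ i : ι, ∃ (v : (Fin m → Fin 2) → ℂ) (s : Fin m → Fin 4),
      K i = Matrix.diagonal v * pauliString s) :
    ∀ w : Fin m → Fin 4, ∃ u : (Fin m → Fin 2) → ℂ,
      ∑ i : ι, K i * pauliString w * (K i)ᴴ = Matrix.diagonal u * pauliString w := by
  intro w
  have h2 : ∀ x : Fin m → Fin 2, x + x = 0 := by
    have h : ∀ y : Fin 2, y + y = 0 := by decide
    intro x; funext i; exact h (x i)
  set tw : Fin m → Fin 2 := fun i => pshift (w i) with htw
  set Φ := ∑ i : ι, K i * pauliString w * (K i)ᴴ with hΦ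
  -- support lemma for each Kraus term
  have hsupp : ∀ a b, b ≠ a + tw → Φ a b = 0 := by
    intro a b hab
    rw [hΦ, Matrix.sum_apply]
    apply Finset.sum_eq_zero
    intro i _
    obtain ⟨v, s, hs⟩ := hK i
    set ts : Fin m → Fin 2 := fun j => pshift (s j) with hts
    have hKsupp : ∀ a b, b ≠ a + ts → K i a b = 0 := by
      intro a b h
      rw [hs]
      have := supp_mul (supp_diag v) (fun a b h => pauliString_eq_zero s a b
        (by intro he; exact h (by rw [he]; rfl))) a b
      apply this
      rw [add_zero]
      exact h
    have hKW : ∀ a b, b ≠ a + ts + tw → (K i * pauliString w) a b = 0 :=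
      supp_mul hKsupp (fun a b h => pauliString_eq_zero w a b
        (by intro he; exact h (by rw [he]; rfl)))
    have hKH : ∀ a b, b ≠ a + ts → (K i)ᴴ a b = 0 :=
      supp_conjTranspose (h2 ts) hKsupp
    have hKW' : ∀ a b, b ≠ a + (ts + tw) → (K i * pauliString w) a b = 0 :=
      fun a b h => hKW a b (by rwa [add_assoc])
    have htot : ∀ a b, b ≠ a + (ts + tw) + ts → (K i * pauliString w * (K i)ᴴ) a b = 0 :=
      supp_mul hKW' hKH
    apply htot
    intro he
    apply hab
    rw [he]
    abel_nf
    rw [show (2 : ℤ) • ts = ts + ts by abel, h2 ts]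
    abel
  -- W a (a + tw) as nonzero pivot
  have hWne : ∀ a, pauliString w a (a + tw) ≠ 0 := fun a => pauliString_ne_zero w a
  refine ⟨fun a => Φ a (a + tw) * (pauliString w a (a + tw))⁻¹, ?_⟩
  ext a b
  rw [Matrix.diagonal_mul]
  by_cases hb : b = a + tw
  · subst hb
    rw [mul_assoc, inv_mul_cancel₀ (hWne a), mul_one]
  · rw [hsupp a b hb, pauliString_eq_zero w a b
      (by intro he; exact hb (by rw [he]; rfl)), mul_zero]
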